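/- Let θ̄^{(k,l)} = (1/n_k) Σ_{v: c(v)=k} θ_v^{(l)} be the average edge-probability vector from community k to community l. Under positivity of all λ_{jk} and pairwise non-parallelism of {λ^{(l,k')}}_{k'∈[K]} for each l, we have cos(θ_i^{(l)}, θ̄^{(k,l)}) = 1 if c(i) = k, and cos(θ_i^{(l)}, θ̄^{(k,l)}) < 1 if c(i) ≠ k. Consequently, c(i) is the unique maximizer over k ∈ [K] of Σ_{l=1}^K cos(θ_i^{(l)}, θ̄^{(k,l)}). -/

import Mathlib

open Matrix

noncomputable def thetaBar (n K : ℕ) (Θ : Matrix (Fin n) (Fin n) ℝ) (c : Fin n → Fin K)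
    (k l : Fin K) (j : {j : Fin n // c j = l}) : ℝ :=
  (∑ v : {v : Fin n // c v = k}, Θ v.1 j.1) / (Fintype.card {v : Fin n // c v = k} : ℝ)

noncomputable def cosBar (n K : ℕ) (Θ : Matrix (Fin n) (Fin n) ℝ) (c : Fin n → Fin K)
    (i : Fin n) (k l : Fin K) : ℝ :=
  (∑ v : {v : Fin n // c v = l}, Θ i v.1 * thetaBar n K Θ c k l v) /
    (Real.sqrt (∑ v : {v : Fin n // c v = l}, Θ i v.1 ^ 2) *
      Real.sqrt (∑ v : {v : Fin n // c v = l}, thetaBar n K Θ c k l v ^ 2))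

lemma strictCS {ι : Type*} [Fintype ι] (x y : ι → ℝ)
    (hx : 0 < ∑ v, x v ^ 2)
    (h : ∀ t : ℝ, y ≠ t • x) :
    ∑ v, x v * y v < Real.sqrt (∑ v, x v ^ 2) * Real.sqrt (∑ v, y v ^ 2) := by
  set X : EuclideanSpace ℝ ι := WithLp.toLp 2 x with hX
  set Y : EuclideanSpace ℝ ι := WithLp.toLp 2 y with hY
  have hnX : ‖X‖ = Real.sqrt (∑ v, x v ^ 2) := by
    rw [EuclideanSpace.norm_eq]
    congr 1
    exact Finset.sum_congr rfl fun v _ => by rw [Real.norm_eq_abs, sq_abs]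
  have hnY : ‖Y‖ = Real.sqrt (∑ v, y v ^ 2) := by
    rw [EuclideanSpace.norm_eq]
    congr 1
    exact Finset.sum_congr rfl fun v _ => by rw [Real.norm_eq_abs, sq_abs]
  have hinner : (inner ℝ X Y : ℝ) = ∑ v, x v * y v := by
    rw [PiLp.inner_apply]
    exact Finset.sum_congr rfl fun v _ => by simp [RCLike.inner_apply, X, Y, mul_comm]
  rw [← hnX, ← hnY, ← hinner]
  refine inner_lt_norm_mul_iff_real.mpr ?_
  intro heq
  have hX0 : Real.sqrt (∑ v, x v ^ 2) ≠ 0 := (Real.sqrt_pos.mpr hx).ne'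
  have hv : ∀ v, ‖Y‖ * x v = ‖X‖ * y v := fun v => by
    have := congrArg (fun z : EuclideanSpace ℝ ι => z v) heq
    simp only [PiLp.smul_apply, smul_eq_mul] at this
    exact this
  refine h (‖Y‖ / ‖X‖) (funext fun v => ?_)
  have := hv v
  rw [Pi.smul_apply, smul_eq_mul, div_mul_eq_mul_div, eq_div_iff (by rw [hnX]; exact hX0)]
  linarith

lemma cos_scale {ι : Type*} [Fintype ι] (a b : ℝ) (ha : 0 < a) (hb : 0 < b) (x y : ι → ℝ) :
    (∑ v, (a * x v) * (b * y v)) /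
      (Real.sqrt (∑ v, (a * x v) ^ 2) * Real.sqrt (∑ v, (b * y v) ^ 2)) =
    (∑ v, x v * y v) / (Real.sqrt (∑ v, x v ^ 2) * Real.sqrt (∑ v, y v ^ 2)) := by
  have h1 : (∑ v, (a * x v) * (b * y v)) = (a * b) * ∑ v, x v * y v := by
    rw [Finset.mul_sum]; exact Finset.sum_congr rfl fun v _ => by ring
  have h2 : Real.sqrt (∑ v, (a * x v) ^ 2) = a * Real.sqrt (∑ v, x v ^ 2) := by
    have : (∑ v, (a * x v) ^ 2) = a ^ 2 * ∑ v, x v ^ 2 := by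
      rw [Finset.mul_sum]; exact Finset.sum_congr rfl fun v _ => by ring
    rw [this, Real.sqrt_mul (sq_nonneg a), Real.sqrt_sq ha.le]
  have h3 : Real.sqrt (∑ v, (b * y v) ^ 2) = b * Real.sqrt (∑ v, y v ^ 2) := by
    have : (∑ v, (b * y v) ^ 2) = b ^ 2 * ∑ v, y v ^ 2 := by
      rw [Finset.mul_sum]; exact Finset.sum_congr rfl fun v _ => by ring
    rw [this, Real.sqrt_mul (sq_nonneg b), Real.sqrt_sq hb.le]
  rw [h1, h2, h3]
  rw [show a * Real.sqrt (∑ v, x v ^ 2) * (b * Real.sqrt (∑ v, y v ^ 2))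
      = (a * b) * (Real.sqrt (∑ v, x v ^ 2) * Real.sqrt (∑ v, y v ^ 2)) by ring]
  exact mul_div_mul_left _ _ (by positivity)

theorem pabm_thetaBar_cosine (n K : ℕ) (hK : 0 < K)
    (Λ : Matrix (Fin n) (Fin K) ℝ) (c : Fin n → Fin K)
    (hpos : ∀ i k, 0 < Λ i k)
    (hne : ∀ k : Fin K, ∃ i, c i = k)
    (hnonpar : ∀ l k k' : Fin K, k ≠ k' → ∀ t : ℝ,
      (fun v : {v : Fin n // c v = l} => Λ v.1 k') ≠
        t • (fun v : {v : Fin n // c v = l} => Λ v.1 k))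
    (Θ : Matrix (Fin n) (Fin n) ℝ)
    (hΘ : ∀ i j, Θ i j = Λ i (c j) * Λ j (c i)) :
    ∀ i : Fin n,
      (∀ l : Fin K, cosBar n K Θ c i (c i) l = 1) ∧
      (∀ k l : Fin K, c i ≠ k → cosBar n K Θ c i k l < 1) ∧
      (∀ k : Fin K, k ≠ c i →
        ∑ l, cosBar n K Θ c i k l < ∑ l, cosBar n K Θ c i (c i) l) := by
  haveI hinst : ∀ m : Fin K, Nonempty {v : Fin n // c v = m} := fun m =>
    let ⟨j, hj⟩ := hne m; ⟨⟨j, hj⟩⟩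
  haveI : Nonempty (Fin K) := Fin.pos_iff_nonempty.mp hK
  intro i
  -- key computation
  have key : ∀ k l : Fin K, cosBar n K Θ c i k l =
      (∑ v : {v : Fin n // c v = l}, Λ v.1 (c i) * Λ v.1 k) /
        (Real.sqrt (∑ v : {v : Fin n // c v = l}, Λ v.1 (c i) ^ 2) *
          Real.sqrt (∑ v : {v : Fin n // c v = l}, Λ v.1 k ^ 2)) := by
    intro k l
    set a : ℝ := Λ i l with ha
    set b : ℝ := (∑ u : {u : Fin n // c u = k}, Λ u.1 l) /
      (Fintype.card {u : Fin n // c u = k} : ℝ) with hb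
    have hΘi : ∀ v : {v : Fin n // c v = l}, Θ i v.1 = a * Λ v.1 (c i) := by
      intro v; rw [hΘ, v.2]
    have hbar : ∀ v : {v : Fin n // c v = l},
        thetaBar n K Θ c k l v = b * Λ v.1 k := by
      intro v
      rw [thetaBar]
      have : (∑ u : {u : Fin n // c u = k}, Θ u.1 v.1)
          = (∑ u : {u : Fin n // c u = k}, Λ u.1 l) * Λ v.1 k := by
        rw [Finset.sum_mul]
        exact Finset.sum_congr rfl fun u _ => by rw [hΘ, v.2, u.2]
      rw [this, hb]; ring
    have ha0 : 0 < a := hpos i l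
    have hb0 : 0 < b := by
      apply div_pos
      · exact Finset.sum_pos (fun u _ => hpos u.1 l) Finset.univ_nonempty
      · exact_mod_cast Fintype.card_pos
    simp only [cosBar, hΘi, hbar]
    exact cos_scale a b ha0 hb0 _ _
  have hsumpos : ∀ k l : Fin K,
      0 < ∑ v : {v : Fin n // c v = l}, Λ v.1 k ^ 2 := fun k l =>
    Finset.sum_pos (fun v _ => pow_pos (hpos v.1 k) 2) Finset.univ_nonempty
  have h1 : ∀ l : Fin K, cosBar n K Θ c i (c i) l = 1 := by
    intro l
    rw [key (c i) l]
    have hS := hsumpos (c i) l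
    rw [Finset.sum_congr rfl fun (v : {v : Fin n // c v = l}) _ =>
      (sq (Λ v.1 (c i))).symm]
    rw [Real.mul_self_sqrt hS.le]
    exact div_self hS.ne'
  have h2 : ∀ k l : Fin K, c i ≠ k → cosBar n K Θ c i k l < 1 := by
    intro k l hik
    rw [key k l]
    rw [div_lt_one (mul_pos (Real.sqrt_pos.mpr (hsumpos (c i) l)) (Real.sqrt_pos.mpr (hsumpos k l)))]
    exact strictCS _ _ (hsumpos (c i) l) (fun t => hnonpar l (c i) k hik t)
  refine ⟨h1, h2, fun k hk => ?_⟩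
  have : (Finset.univ : Finset (Fin K)).Nonempty := Finset.univ_nonempty
  refine Finset.sum_lt_sum_of_nonempty this fun l _ => ?_
  rw [h1 l]
  exact h2 k l (Ne.symm hk)
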